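/- Let G be a group that is nilpotent of class at most 3 (i.e. every triple commutator ⁅⁅x,y⁆,z⁆ lies in the center Z(G)), and let a ∈ G satisfy (a·x)^3 = a^3·x^3 for all x ∈ G (i.e. a lies in the commutant C(°G)). Then for every x ∈ G: ⁅a,x³⁆ = ⁅a,x⁆³ = ⁅a³,x⁆ = 1, where ⁅u,v⁆ = uvu⁻¹v⁻¹. In particular a³ lies in the center Z(G), so C(°G)³ ⊆ Z(G). -/

import Mathlib

open scoped commutatorElement

section CommutantAux

variable {G : Type*} [Group G]

private lemma sw {z : G} (hz : ∀ g, z*g = g*z) (u v : G) : u*(z*v) = z*(u*v) := by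
  rw [← mul_assoc, ← hz, mul_assoc]

private lemma commR (u v w : G) : ⁅u,v*w⁆ = ⁅u,v⁆*(⁅v,⁅u,w⁆⁆*⁅u,w⁆) := by
  simp only [commutatorElement_def]; group

private lemma comm_mul_left' (u v w : G) (h : ∀ g, ⁅v,w⁆*g = g*⁅v,w⁆) :
    ⁅u*v,w⁆ = ⁅v,w⁆*⁅u,w⁆ := by
  have e : ⁅u*v,w⁆ = ⁅u,⁅v,w⁆⁆*(⁅v,w⁆*⁅u,w⁆) := by
    simp only [commutatorElement_def]; group
  rw [e, commutatorElement_eq_one_iff_commute.mpr ((h u).symm), one_mul]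

private lemma comm_central_arg (u v w : G) (h : ∀ g, v*g = g*v) : ⁅u, v*w⁆ = ⁅u,w⁆ := by
  have e : ⁅u,v*w⁆ = u*(v*(w*(u⁻¹*(w⁻¹*v⁻¹)))) := by
    simp only [commutatorElement_def]; group
  rw [e, sw h]
  have e2 : u*(w*(u⁻¹*(w⁻¹*v⁻¹))) = ⁅u,w⁆*v⁻¹ := by
    simp only [commutatorElement_def]; group
  rw [e2, ← sw h]
  group

private lemma inv_inv_comm (x c : G) (h : ∀ g, ⁅x,c⁆*g = g*⁅x,c⁆) : ⁅x⁻¹,c⁻¹⁆ = ⁅x,c⁆ := by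
  have e : ⁅x⁻¹,c⁻¹⁆ = x⁻¹*(c⁻¹*(⁅x,c⁆*(c*x))) := by
    simp only [commutatorElement_def]; group
  rw [e, sw h, sw h]
  group

private lemma cube_comm (x a : G) (hz : ∀ g, ⁅x,⁅x,a⁆⁆*g = g*⁅x,⁅x,a⁆⁆) :
    ⁅x^3,a⁆ = ⁅x,⁅x,a⁆⁆^3*⁅x,a⁆^3 := by
  have hw1 := sw hz
  calc ⁅x^3,a⁆
      = x*(⁅x,⁅x,a⁆⁆*(⁅x,a⁆^2*(x⁻¹*⁅x,a⁆))) := by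
        simp only [commutatorElement_def, pow_succ, pow_zero, one_mul]; group
    _ = ⁅x,⁅x,a⁆⁆*(x*(⁅x,a⁆^2*(x⁻¹*⁅x,a⁆))) := by simp only [hw1]
    _ = ⁅x,⁅x,a⁆⁆*(x*(⁅x,a⁆*(x⁻¹*(⁅x,⁅x,a⁆⁆*(⁅x,a⁆*⁅x,a⁆))))) := by
        simp only [commutatorElement_def, pow_succ, pow_zero, one_mul]; group
    _ = ⁅x,⁅x,a⁆⁆*(⁅x,⁅x,a⁆⁆*(x*(⁅x,a⁆*(x⁻¹*(⁅x,a⁆*⁅x,a⁆))))) := by simp only [hw1]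
    _ = ⁅x,⁅x,a⁆⁆*(⁅x,⁅x,a⁆⁆*(⁅x,⁅x,a⁆⁆*(⁅x,a⁆*(⁅x,a⁆*⁅x,a⁆)))) := by
        simp only [commutatorElement_def]; group
    _ = ⁅x,⁅x,a⁆⁆^3*⁅x,a⁆^3 := by simp only [pow_succ, pow_zero, one_mul]; group

private lemma key_lemma (a x c z1 z2 : G)
    (hc : c = ⁅x,a⁆) (h1 : z1 = ⁅x,c⁆) (h2 : z2 = ⁅c,a⁆)
    (hz1 : ∀ g, z1*g = g*z1) (hz2 : ∀ g, z2*g = g*z2)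
    (hx : (a*x)^3 = a^3*x^3) : z1*(z2^4*c^3) = 1 := by
  have hw1 := sw hz1
  have hw2 := sw hz2
  have hz24 : ∀ g : G, z2^4*g = g*z2^4 := fun g => ((Commute.pow_left (hz2 g) 4))
  have hw24 := sw hz24
  have E : (a*x)^3 = z1*(z2^4*(a^3*(c^3*x^3))) := by
    calc (a*x)^3
        = a*(c*(a*(z1*(c^2*(a*x^3))))) := by
          rw [h1, hc]; simp only [commutatorElement_def, pow_succ, pow_zero, one_mul]; group
      _ = z1*(a*(c*(a*(c^2*(a*x^3))))) := by simp only [hw1]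
      _ = z1*(a*(z2*(a*(c^3*(a*x^3)))))  := by
          rw [h2]; simp only [commutatorElement_def, pow_succ, pow_zero, one_mul]; group
      _ = z1*(z2*(a*(a*(c^3*(a*x^3))))) := by simp only [hw2]
      _ = z1*(z2*(a*(a*(c^2*(z2*(a*(c*x^3))))))) := by
          rw [h2]; simp only [commutatorElement_def, pow_succ, pow_zero, one_mul]; group
      _ = z1*(z2*(z2*(a*(a*(c^2*(a*(c*x^3))))))) := by simp only [hw2]
      _ = z1*(z2*(z2*(a*(a*(c*(z2*(a*(c^2*x^3)))))))) := by
          rw [h2]; simp only [commutatorElement_def, pow_succ, pow_zero, one_mul]; group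
      _ = z1*(z2*(z2*(z2*(a*(a*(c*(a*(c^2*x^3)))))))) := by simp only [hw2]
      _ = z1*(z2*(z2*(z2*(a*(a*(z2*(a*(c^3*x^3)))))))) := by
          rw [h2]; simp only [commutatorElement_def, pow_succ, pow_zero, one_mul]; group
      _ = z1*(z2*(z2*(z2*(z2*(a*(a*(a*(c^3*x^3)))))))) := by simp only [hw2]
      _ = z1*(z2^4*(a^3*(c^3*x^3))) := by
          simp only [pow_succ, pow_zero, one_mul]; group
  have E2 : a^3*x^3 = (a^3*(z1*(z2^4*c^3)))*x^3 := by
    rw [← hx, E]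
    conv_rhs => rw [hw1, hw24]
    group
  have E4 : a^3 = a^3*(z1*(z2^4*c^3)) := mul_right_cancel E2
  exact (mul_eq_left.mp E4.symm)

end CommutantAux

theorem commutant_element_cube_central {G : Type*} [Group G]
    (h3 : ∀ x y z : G, ⁅⁅x, y⁆, z⁆ ∈ Subgroup.center G) (a : G)
    (ha : ∀ x : G, (a * x) ^ 3 = a ^ 3 * x ^ 3) :
    (∀ x : G, ⁅a, x ^ 3⁆ = ⁅a, x⁆ ^ 3 ∧ ⁅a, x⁆ ^ 3 = ⁅a ^ 3, x⁆ ∧ ⁅a ^ 3, x⁆ = 1) ∧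
      a ^ 3 ∈ Subgroup.center G := by
  -- centrality of triple commutators, in swap form
  have hcen : ∀ u v w g : G, ⁅⁅u,v⁆,w⁆ * g = g * ⁅⁅u,v⁆,w⁆ :=
    fun u v w g => ((Subgroup.mem_center_iff.mp (h3 u v w)) g).symm
  have hcen' : ∀ w u v g : G, ⁅w,⁅u,v⁆⁆ * g = g * ⁅w,⁅u,v⁆⁆ := by
    intro w u v g
    have e : ⁅w,⁅u,v⁆⁆ = ⁅⁅u,v⁆,w⁆⁻¹ := (commutatorElement_inv _ _).symm
    rw [e]
    exact (Commute.inv_left (hcen u v w g))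
  -- the key consequence of ha
  have hstar : ∀ x : G, ⁅x,⁅x,a⁆⁆ * (⁅⁅x,a⁆,a⁆^4 * ⁅x,a⁆^3) = 1 :=
    fun x => key_lemma a x ⁅x,a⁆ ⁅x,⁅x,a⁆⁆ ⁅⁅x,a⁆,a⁆ rfl rfl rfl
      (hcen' x x a) (hcen x a a) (ha x)
  -- Step 2: ⁅a,⁅x,a⁆⁆ = 1 for all x
  have hac : ∀ x : G, ⁅a,⁅x,a⁆⁆ = 1 := by
    intro x
    have e0 : ⁅x*a, a⁆ = ⁅x,a⁆ := by simp only [commutatorElement_def]; group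
    have e1 : ⁅x*a,⁅x,a⁆⁆ = ⁅a,⁅x,a⁆⁆*⁅x,⁅x,a⁆⁆ :=
      comm_mul_left' x a ⁅x,a⁆ (hcen' a x a)
    have h' := hstar (x*a)
    rw [e0, e1, mul_assoc, hstar x, mul_one] at h'
    exact h'
  have hz2 : ∀ x : G, ⁅⁅x,a⁆,a⁆ = 1 := by
    intro x
    have : ⁅⁅x,a⁆,a⁆ = ⁅a,⁅x,a⁆⁆⁻¹ := (commutatorElement_inv a ⁅x,a⁆).symm
    rw [this, hac x, inv_one]
  -- Step 3: the simplified key relation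
  have hc3 : ∀ x : G, ⁅x,⁅x,a⁆⁆ * ⁅x,a⁆^3 = 1 := by
    intro x
    have h' := hstar x
    rw [hz2 x, one_pow, one_mul] at h'
    exact h'
  -- Step 4+5: ⁅x,⁅x,a⁆⁆ = 1 for all x
  have hz1 : ∀ x : G, ⁅x,⁅x,a⁆⁆ = 1 := by
    intro x
    have hz1g : ∀ g : G, ⁅x,⁅x,a⁆⁆*g = g*⁅x,⁅x,a⁆⁆ := hcen' x x a
    have hc3x : ⁅x,a⁆^3 = ⁅x,⁅x,a⁆⁆⁻¹ := eq_inv_of_mul_eq_one_right (hc3 x)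
    -- z1^5 = 1 via x⁻¹
    have cinv : ⁅x⁻¹,a⁆ = ⁅x,⁅x,a⁆⁆ * ⁅x,a⁆⁻¹ := by
      have e : ⁅x⁻¹,a⁆ = ⁅x⁻¹,⁅x,a⁆⁻¹⁆ * ⁅x,a⁆⁻¹ := by
        simp only [commutatorElement_def]; group
      rw [e, inv_inv_comm x ⁅x,a⁆ hz1g]
    have hz15 : ⁅x,⁅x,a⁆⁆^5 = 1 := by
      have h' := hc3 x⁻¹
      rw [cinv] at h'
      rw [comm_central_arg x⁻¹ ⁅x,⁅x,a⁆⁆ ⁅x,a⁆⁻¹ hz1g] at h'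
      rw [inv_inv_comm x ⁅x,a⁆ hz1g] at h'
      have hpow : (⁅x,⁅x,a⁆⁆ * ⁅x,a⁆⁻¹)^3 = ⁅x,⁅x,a⁆⁆^3 * (⁅x,a⁆⁻¹)^3 :=
        Commute.mul_pow (hz1g _) 3
      rw [hpow, inv_pow, hc3x] at h'
      have gen : ∀ z : G, z^5 = z * (z^3 * (z⁻¹)⁻¹) := fun z => by group
      rw [gen]; exact h'
    -- z1^6 = 1 via x^3
    have hX3 : ⁅x^3,a⁆ = ⁅x,⁅x,a⁆⁆^2 := by
      have gen : ∀ z : G, z^3 * z⁻¹ = z^2 := fun z => by group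
      rw [cube_comm x a hz1g, hc3x]; exact gen _
    have hz16 : ⁅x,⁅x,a⁆⁆^6 = 1 := by
      have h' := hc3 (x^3)
      rw [hX3] at h'
      have e1 : ⁅x^3, ⁅x,⁅x,a⁆⁆^2⁆ = 1 := by
        refine commutatorElement_eq_one_iff_commute.mpr ?_
        exact ((Commute.pow_left (hz1g (x^3)) 2).symm)
      rw [e1, one_mul] at h'
      have gen : ∀ z : G, z^6 = (z^2)^3 := fun z => by group
      rw [gen]; exact h'
    have gen : ∀ z : G, z = z^6 * (z^5)⁻¹ := fun z => by group
    rw [gen ⁅x,⁅x,a⁆⁆, hz15, hz16, inv_one, mul_one]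
  -- cubes of commutators vanish
  have hcc3 : ∀ x : G, ⁅x,a⁆^3 = 1 := by
    intro x
    have h' := hc3 x
    rw [hz1 x, one_mul] at h'
    exact h'
  -- ⁅x, a^3⁆ = 1
  have hxa3 : ∀ x : G, ⁅x,a^3⁆ = 1 := by
    intro x
    have h2 : ⁅x,a^2⁆ = ⁅x,a⁆*⁅x,a⁆ := by
      have e : a^2 = a*a := sq a
      rw [e, commR, hac x, one_mul]
    have h3' : ⁅x,a^3⁆ = ⁅x,a⁆^3 := by
      have e : a^3 = a*a^2 := by group
      rw [e, commR, h2]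
      have e2 : ⁅a,⁅x,a⁆*⁅x,a⁆⁆ = 1 := by
        refine commutatorElement_eq_one_iff_commute.mpr ?_
        have hca : Commute a ⁅x,a⁆ := commutatorElement_eq_one_iff_commute.mp (hac x)
        exact hca.mul_right hca
      rw [e2, one_mul]
      have gen : ∀ z : G, z * (z * z) = z^3 := fun z => by
        rw [pow_succ, pow_succ, pow_one, mul_assoc]
      exact gen _
    rw [h3', hcc3 x]
  -- ⁅x^3, a⁆ = 1
  have hx3a : ∀ x : G, ⁅x^3,a⁆ = 1 := by
    intro x
    rw [cube_comm x a (hcen' x x a), hz1 x, hcc3 x, one_pow, one_mul]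
  have hmain : ∀ x : G, ⁅a, x ^ 3⁆ = ⁅a, x⁆ ^ 3 ∧ ⁅a, x⁆ ^ 3 = ⁅a ^ 3, x⁆ ∧ ⁅a ^ 3, x⁆ = 1 := by
    intro x
    have g1 : ⁅a,x^3⁆ = 1 := by
      rw [← commutatorElement_inv (x^3) a, hx3a x, inv_one]
    have g2 : ⁅a,x⁆^3 = 1 := by
      rw [← commutatorElement_inv x a, inv_pow, hcc3 x, inv_one]
    have g3 : ⁅a^3,x⁆ = 1 := by
      rw [← commutatorElement_inv x (a^3), hxa3 x, inv_one]
    exact ⟨by rw [g1, g2], by rw [g2, g3], g3⟩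
  refine ⟨hmain, ?_⟩
  refine Subgroup.mem_center_iff.mpr (fun g => ?_)
  exact (commutatorElement_eq_one_iff_commute.mp (hmain g).2.2).eq.symm
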